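/- Let u = max{u₁, u₂} with u₁, u₂ ∈ C¹(ℝⁿ) convex, ∇u_i(ℝⁿ) ⊂ Ω̄_i where Ω̄₁, Ω̄₂ are disjoint compact sets, and suppose {ch(Ω̄₁), ch(Ω̄₂)} are disjoint (i.e. the two-element collection is affinely independent). Then the coincidence set Σ := {u₁ = u₂} is a C¹ hypersurface in ℝⁿ: at every point x ∈ Σ, ∇u₁(x) ≠ ∇u₂(x), so the implicit function theorem applies to u₁ − u₂. -/

import Mathlib

open Set

noncomputable section

/-- Affinely independent (i.e. disjoint) convex hulls of the target pieces yield a `C¹`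
hypersurface tear: if `u₁, u₂` are `C¹` convex with gradients valued in disjoint compact
sets whose convex hulls are disjoint, then on the coincidence set `Σ = {u₁ = u₂}` the
gradients differ, and `Σ` is locally the zero set of a `C¹` function with nonvanishing
derivative. -/
theorem tear_is_C1_hypersurface (n : ℕ)
    (u₁ u₂ : EuclideanSpace ℝ (Fin n) → ℝ)
    (hu₁ : ConvexOn ℝ univ u₁) (hu₂ : ConvexOn ℝ univ u₂)
    (hC₁ : ContDiff ℝ 1 u₁) (hC₂ : ContDiff ℝ 1 u₂)
    (Ω₁ Ω₂ : Set (EuclideanSpace ℝ (Fin n)))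
    (hΩ₁ : IsCompact Ω₁) (hΩ₂ : IsCompact Ω₂)
    (hgrad₁ : ∀ x, gradient u₁ x ∈ Ω₁) (hgrad₂ : ∀ x, gradient u₂ x ∈ Ω₂)
    (hdisj : Disjoint (convexHull ℝ Ω₁) (convexHull ℝ Ω₂)) :
    ∀ x ∈ {x | u₁ x = u₂ x},
      gradient u₁ x ≠ gradient u₂ x ∧
      ∃ (U : Set (EuclideanSpace ℝ (Fin n))) (f : EuclideanSpace ℝ (Fin n) → ℝ),
        IsOpen U ∧ x ∈ U ∧ ContDiffOn ℝ 1 f U ∧ (∀ y ∈ U, fderiv ℝ f y ≠ 0) ∧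
        {x | u₁ x = u₂ x} ∩ U = {y ∈ U | f y = 0} := by
  have hne : ∀ y, gradient u₁ y ≠ gradient u₂ y := by
    intro y h
    exact Set.disjoint_left.1 hdisj (subset_convexHull ℝ Ω₁ (hgrad₁ y))
      (h ▸ subset_convexHull ℝ Ω₂ (hgrad₂ y))
  intro x hx
  refine ⟨hne x, univ, fun y => u₁ y - u₂ y, isOpen_univ, mem_univ x,
    (hC₁.sub hC₂).contDiffOn, ?_, ?_⟩
  · intro y _ h
    apply hne y
    have h1 : DifferentiableAt ℝ u₁ y := hC₁.differentiable one_ne_zero y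
    have h2 : DifferentiableAt ℝ u₂ y := hC₂.differentiable one_ne_zero y
    have : fderiv ℝ u₁ y = fderiv ℝ u₂ y := by
      have := fderiv_fun_sub h1 h2 (x := y)
      rw [h] at this
      have := sub_eq_zero.mp this.symm
      exact this
    simp only [gradient, this]
  · ext y
    simp only [Set.mem_inter_iff, Set.mem_setOf_eq, Set.mem_univ, true_and, and_true,
      sub_eq_zero, and_comm]
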